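/- Let X = (ω+1) × ω₁ with the product of order topologies. Then X is a locally compact, non-compact, first-countable Hausdorff space, and its one-point compactification αX is radial at the point at infinity ⋆: every subset of X whose closure in αX contains ⋆ contains the range of a transfinite sequence converging to ⋆. -/

import Mathlib

open Filter Topology Set

universe u v

/-- `x` has a neighbourhood base in the subspace `S` well-ordered by reverse inclusion. -/
def HasWONhdsBase {X : Type u} [TopologicalSpace X] (x : X) (S : Set X) : Prop :=
  ∃ (o : Ordinal.{u}) (B : ↥(Set.Iio o) → Set X),
    (∀ i, B i ⊆ S) ∧ (∀ i j, i ≤ j → B j ⊆ B i) ∧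
    (𝓝[S] x).HasBasis (fun _ => True) B

/-- `X` is radial at `x`. -/
def RadialAt (X : Type u) [TopologicalSpace X] (x : X) : Prop :=
  ∀ A : Set X, x ∈ closure A →
    ∃ (o : Ordinal.{u}) (f : ↥(Set.Iio o) → X), o ≠ 0 ∧
      (∀ i, f i ∈ A) ∧ Filter.Tendsto f Filter.atTop (𝓝 x)
noncomputable def om1 : Ordinal.{0} := (Cardinal.aleph 1).ord

/-- The space `(ω+1) × ω₁`. -/
abbrev X14 : Type 1 := ↥(Set.Iic Ordinal.omega0.{0}) × ↥(Set.Iio om1)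

lemma om1_isLimit : Order.IsSuccLimit om1 := Cardinal.isSuccLimit_ord (Cardinal.aleph0_le_aleph 1)

lemma om1_pos : 0 < om1 := om1_isLimit.pos

lemma isCompact_Iic_ord (a : Ordinal.{0}) : IsCompact (Set.Iic a) := by
  rw [← Set.Icc_bot]
  exact isCompact_Icc

/-- In a subtype of ordinals, the image of `Iio b` under `val` -/
lemma val_image_Iic {S : Set Ordinal.{0}} (x : ↥S) (h : Set.Iic x.1 ⊆ S) :
    Subtype.val '' {y : ↥S | y ≤ x} = Set.Iic x.1 := by
  ext a
  constructor
  · rintro ⟨y, hy, rfl⟩; exact hy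
  · intro ha; exact ⟨⟨a, h ha⟩, ha, rfl⟩

lemma isCompact_Iic_sub (x : ↥(Set.Iio om1)) :
    IsCompact {y : ↥(Set.Iio om1) | y ≤ x} := by
  rw [Topology.IsEmbedding.subtypeVal.isCompact_iff]
  rw [val_image_Iic x (fun a ha => Set.mem_Iio.mpr (lt_of_le_of_lt ha x.2))]
  exact isCompact_Iic_ord _

lemma Iic_mem_nhds_sub (x : ↥(Set.Iio om1)) :
    {y : ↥(Set.Iio om1) | y ≤ x} ∈ 𝓝 x := by
  have hsucc : Order.succ x.1 < om1 := om1_isLimit.succ_lt x.2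
  have heq : {y : ↥(Set.Iio om1) | y ≤ x} =
      Set.Iio (⟨Order.succ x.1, hsucc⟩ : ↥(Set.Iio om1)) := by
    ext y
    simp only [Set.mem_setOf_eq, Set.mem_Iio, ← Subtype.coe_lt_coe, ← Subtype.coe_le_coe]
    exact (Order.lt_succ_iff).symm
  rw [heq]
  exact isOpen_Iio.mem_nhds (by simp [← Subtype.coe_lt_coe, Order.lt_succ x.1])

lemma wlc_om1 : WeaklyLocallyCompactSpace ↥(Set.Iio om1) :=
  ⟨fun x => ⟨_, isCompact_Iic_sub x, Iic_mem_nhds_sub x⟩⟩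

instance cpt_Iic : CompactSpace ↥(Set.Iic Ordinal.omega0.{0}) :=
  isCompact_iff_compactSpace.mp (isCompact_Iic_ord _)

lemma nhds_countably_generated {a : Ordinal.{0}} (h : a.card ≤ Cardinal.aleph0) :
    (𝓝 a).IsCountablyGenerated := by
  rcases eq_or_ne a 0 with rfl | ha
  · have hopen : IsOpen ({(0 : Ordinal.{0})} : Set Ordinal) := by
      have : ({(0 : Ordinal.{0})} : Set Ordinal) = Set.Iio 1 := by
        ext x; simp [Ordinal.lt_one_iff_zero]
      rw [this]; exact isOpen_Iio
    rw [(isOpen_singleton_iff_nhds_eq_pure (0 : Ordinal.{0})).mp hopen]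
    infer_instance
  · refine Filter.HasCountableBasis.isCountablyGenerated
      ⟨SuccOrder.hasBasis_nhds_Ioc_of_exists_lt ⟨0, pos_iff_ne_zero.mpr ha⟩, ?_⟩
    have : {i : Ordinal.{0} | i < a} = Set.Iio a := rfl
    rw [this, ← Set.countable_coe_iff, ← Cardinal.mk_le_aleph0_iff,
      Ordinal.mk_Iio_ordinal]
    exact Cardinal.lift_le_aleph0.mpr h

lemma fc_sub {S : Set Ordinal.{0}} (h : ∀ x ∈ S, x.card ≤ Cardinal.aleph0) :
    FirstCountableTopology ↥S := by
  constructor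
  intro x
  rw [nhds_subtype]
  have := nhds_countably_generated (h x.1 x.2)
  infer_instance

instance fc_Iic : FirstCountableTopology ↥(Set.Iic Ordinal.omega0.{0}) :=
  fc_sub (fun x hx => by
    calc x.card ≤ Ordinal.omega0.card := Ordinal.card_le_card hx
    _ = Cardinal.aleph0 := Ordinal.card_omega0)

instance fc_om1 : FirstCountableTopology ↥(Set.Iio om1) :=
  fc_sub (fun x hx => by
    have : x.card < Cardinal.aleph 1 := Cardinal.lt_ord.mp hx
    rwa [← Cardinal.succ_aleph0, Order.lt_succ_iff] at this)

lemma snd_bounded_of_compact {K : Set X14} (hK : IsCompact K) (hne : K.Nonempty) :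
    ∃ β : ↥(Set.Iio om1), ∀ p ∈ K, p.2 ≤ β := by
  have h2 : IsCompact (Prod.snd '' K) := hK.image continuous_snd
  obtain ⟨β, hβ⟩ := h2.exists_isGreatest (hne.image _)
  exact ⟨β, fun p hp => hβ.2 ⟨p, hp, rfl⟩⟩

lemma unbounded_of_mem_closure {A : Set X14}
    (hA : (OnePoint.infty : OnePoint X14) ∈ closure (OnePoint.some '' A))
    (b : ↥(Set.Iio om1)) : ∃ p ∈ A, b < p.2 := by
  by_contra hcon
  push_neg at hcon
  set K : Set X14 := Set.univ ×ˢ {y : ↥(Set.Iio om1) | y ≤ b} with hKdef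
  have hKc : IsCompact K := isCompact_univ.prod (isCompact_Iic_sub b)
  have hKcl : IsClosed K := isClosed_univ.prod isClosed_Iic
  have hmem : ((OnePoint.some : X14 → OnePoint X14) '' Kᶜ ∪ {OnePoint.infty})
      ∈ 𝓝 (OnePoint.infty : OnePoint X14) :=
    OnePoint.hasBasis_nhds_infty.mem_of_mem ⟨hKcl, hKc⟩
  rcases mem_closure_iff_nhds.mp hA _ hmem with ⟨z, hz1, hz2⟩
  rcases hz2 with ⟨p, hpA, rfl⟩
  rcases hz1 with hz1 | hz1
  · obtain ⟨q, hq, hq2⟩ := hz1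
    cases OnePoint.coe_injective hq2
    exact hq ⟨Set.mem_univ _, hcon _ hpA⟩
  · exact OnePoint.coe_ne_infty _ hz1

theorem stmt14 :
    LocallyCompactSpace X14 ∧ ¬ CompactSpace X14 ∧
    FirstCountableTopology X14 ∧ T2Space X14 ∧
    ∀ A : Set X14, (OnePoint.infty : OnePoint X14) ∈ closure (OnePoint.some '' A) →
      ∃ (o : Ordinal.{1}) (f : ↥(Set.Iio o) → OnePoint X14), o ≠ 0 ∧
        (∀ i, f i ∈ OnePoint.some '' A) ∧
        Filter.Tendsto f Filter.atTop (𝓝 (OnePoint.infty : OnePoint X14)) := by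
  have hwlc : WeaklyLocallyCompactSpace ↥(Set.Iio om1) := wlc_om1
  refine ⟨inferInstance, ?_, inferInstance, inferInstance, ?_⟩
  · -- not compact
    intro h
    have h1 : IsCompact (Set.univ : Set X14) := isCompact_univ
    obtain ⟨β, hβ⟩ := snd_bounded_of_compact h1
      ⟨⟨⟨0, Set.mem_Iic.mpr zero_le⟩, ⟨0, Set.mem_Iio.mpr om1_pos⟩⟩, Set.mem_univ _⟩
    have hsucc : Order.succ β.1 < om1 := om1_isLimit.succ_lt β.2
    have := hβ (⟨0, Set.mem_Iic.mpr zero_le⟩, ⟨Order.succ β.1, Set.mem_Iio.mpr hsucc⟩) (Set.mem_univ _)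
    rw [← Subtype.coe_le_coe] at this
    exact absurd this (not_le.mpr (Order.lt_succ β.1))
  · -- radial
    intro A hA
    have key : ∀ i : ↥(Set.Iio (Ordinal.lift.{1} om1)),
        ∃ p : X14, p ∈ A ∧ i.1 < Ordinal.lift.{1} p.2.1 := by
      intro i
      obtain ⟨a, ha⟩ := Ordinal.mem_range_lift_of_le i.2.le
      have ha' : a < om1 := by
        rw [← Ordinal.lift_lt.{1}, ha]; exact i.2
      obtain ⟨p, hpA, hp⟩ := unbounded_of_mem_closure hA ⟨a, ha'⟩
      refine ⟨p, hpA, ?_⟩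
      rw [← ha]
      exact Ordinal.lift_lt.mpr hp
    choose g hg1 hg2 using key
    have h0lift : (0 : Ordinal.{1}) < Ordinal.lift.{1} om1 := by
      simpa using Ordinal.lift_lt.{1}.mpr om1_pos
    have hne : Nonempty ↥(Set.Iio (Ordinal.lift.{1} om1)) :=
      ⟨⟨0, Set.mem_Iio.mpr h0lift⟩⟩
    refine ⟨Ordinal.lift.{1} om1, fun i => OnePoint.some (g i), ?_, fun i => ⟨g i, hg1 i, rfl⟩, ?_⟩
    · exact h0lift.ne'
    · rw [OnePoint.hasBasis_nhds_infty.tendsto_right_iff]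
      rintro s ⟨hscl, hsc⟩
      rcases s.eq_empty_or_nonempty with rfl | hsne
      · exact Filter.Eventually.of_forall fun i =>
          Or.inl ⟨g i, by simp, rfl⟩
      obtain ⟨β, hβ⟩ := snd_bounded_of_compact hsc hsne
      have hsucc : Order.succ β.1 < om1 := om1_isLimit.succ_lt β.2
      have hi0 : Ordinal.lift.{1} (Order.succ β.1) < Ordinal.lift.{1} om1 :=
        Ordinal.lift_lt.mpr hsucc
      rw [Filter.eventually_atTop]
      refine ⟨⟨Ordinal.lift.{1} (Order.succ β.1), hi0⟩, fun i hi => ?_⟩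
      refine Or.inl ⟨g i, fun hgs => ?_, rfl⟩
      have h1 : Ordinal.lift.{1} (Order.succ β.1) ≤ i.1 := hi
      have h2 : Ordinal.lift.{1} (Order.succ β.1) < Ordinal.lift.{1} (g i).2.1 :=
        lt_of_le_of_lt h1 (hg2 i)
      rw [Ordinal.lift_lt] at h2
      have h3 : (g i).2 ≤ β := hβ _ hgs
      rw [← Subtype.coe_le_coe] at h3
      exact absurd (h3.trans_lt (Order.lt_succ β.1)) (not_lt.mpr h2.le)
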